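/- Let F be a field and X a finite partial order. An element f of IncidenceAlgebra F X lies in the Jacobson radical of IncidenceAlgebra F X if and only if f x x = 0 for every x ∈ X. -/
import Mathlib

open Finset

section aux

variable {F X : Type*} [Field F] [PartialOrder X] [Fintype X] [DecidableEq X]
  [LocallyFiniteOrder X]

lemma diag_mul_aux (f g : IncidenceAlgebra F X) (x : X) : (f * g) x x = f x x * g x x := by
  simp [IncidenceAlgebra.mul_apply]

lemma pow_apply_eq_zero_aux (f : IncidenceAlgebra F X) (hf : ∀ x, f x x = 0) :
    ∀ n : ℕ, ∀ x y : X, (Icc x y).card ≤ n → (f ^ n) x y = 0 := by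
  intro n
  induction n with
  | zero =>
    intro x y hxy
    have hne : ¬ x ≤ y := by
      simpa [Nat.le_zero, Finset.card_eq_zero, Finset.Icc_eq_empty_iff] using hxy
    have hxy' : x ≠ y := fun h => hne (le_of_eq h)
    simp [pow_zero, IncidenceAlgebra.one_apply, hxy']
  | succ n ih =>
    intro x y hxy
    rw [pow_succ', IncidenceAlgebra.mul_apply]
    apply Finset.sum_eq_zero
    intro z hz
    rcases eq_or_ne x z with rfl | hne
    · rw [hf, zero_mul]
    · rw [Finset.mem_Icc] at hz
      have hxz : x < z := lt_of_le_of_ne hz.1 hne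
      have hmem : x ∈ Icc x y := Finset.mem_Icc.2 ⟨le_refl x, hz.1.trans hz.2⟩
      have hsub : Icc z y ⊆ (Icc x y).erase x := by
        intro w hw
        rw [Finset.mem_Icc] at hw
        refine Finset.mem_erase.2 ⟨?_, Finset.mem_Icc.2 ⟨hz.1.trans hw.1, hw.2⟩⟩
        exact (ne_of_gt (lt_of_lt_of_le hxz hw.1))
      have h1 : (Icc z y).card ≤ (Icc x y).card - 1 := by
        calc (Icc z y).card ≤ ((Icc x y).erase x).card := Finset.card_le_card hsub
        _ = (Icc x y).card - 1 := Finset.card_erase_of_mem hmem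
      have h2 : 0 < (Icc x y).card := Finset.card_pos.2 ⟨x, hmem⟩
      have : (Icc z y).card ≤ n := by omega
      rw [ih z y this, mul_zero]

lemma nilpotent_of_diag_aux (f : IncidenceAlgebra F X) (hf : ∀ x, f x x = 0) :
    IsNilpotent f := by
  refine ⟨Fintype.card X, ?_⟩
  ext x y _
  exact pow_apply_eq_zero_aux f hf _ x y (Finset.card_le_univ _)

lemma isUnit_diag_ne_zero_aux {u : IncidenceAlgebra F X} (hu : IsUnit u) (x : X) :
    u x x ≠ 0 := by
  obtain ⟨v, hv⟩ := hu.exists_right_inv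
  intro h
  have := diag_mul_aux u v x
  rw [hv, h, zero_mul, IncidenceAlgebra.one_apply, if_pos rfl] at this
  exact one_ne_zero this

end aux

/-- An element of a finite-dimensional incidence algebra over a field lies in the
Jacobson radical iff its diagonal entries all vanish. -/
theorem mem_jacobson_iff_diag_eq_zero
    {F X : Type*} [Field F] [PartialOrder X] [Fintype X] [DecidableEq X]
    [LocallyFiniteOrder X] (f : IncidenceAlgebra F X) :
    f ∈ (⊥ : Ideal (IncidenceAlgebra F X)).jacobson ↔ ∀ x : X, f x x = 0 := by
  rw [Ideal.mem_jacobson_iff]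
  constructor
  · intro h x
    by_contra hx
    obtain ⟨z, hz⟩ := h ((-(f x x)⁻¹) • (1 : IncidenceAlgebra F X))
    rw [Ideal.mem_bot, sub_eq_zero] at hz
    have hz' : z * (((-(f x x)⁻¹) • (1 : IncidenceAlgebra F X)) * f + 1) = 1 := by
      rw [mul_add, mul_one, ← mul_assoc, hz]
    have hdiag := congrArg (fun g : IncidenceAlgebra F X => g x x) hz'
    simp only [diag_mul_aux, IncidenceAlgebra.add_apply, IncidenceAlgebra.constSMul_apply,
      IncidenceAlgebra.one_apply, if_true, smul_eq_mul, mul_one] at hdiag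
    rw [neg_mul, inv_mul_cancel₀ hx] at hdiag
    simp at hdiag
  · intro h y
    have hd : ∀ x, (y * f) x x = 0 := fun x => by rw [diag_mul_aux, h, mul_zero]
    obtain ⟨u, hu⟩ := (nilpotent_of_diag_aux _ hd).isUnit_add_one
    refine ⟨↑u⁻¹, ?_⟩
    have huinv : (↑u⁻¹ : IncidenceAlgebra F X) * (y * f + 1) = 1 := by
      rw [← hu]; exact u.inv_mul
    rw [mul_add, mul_one] at huinv
    rw [Ideal.mem_bot, sub_eq_zero, mul_assoc]
    exact huinv
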